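/- Let (B,⌊·,·⌋,‖·‖) be an SSDB space, f ∈ PC(B) be a BC-function and g : B → ℝ be a continuous TBC-function. Then P_q(f) − N_q(g) = B, i.e. every c ∈ B can be written c = p − n with p ∈ P_q(f) and n ∈ N_q(g). -/

import Mathlib

open scoped Pointwise

noncomputable section

variable {B : Type*} [NormedAddCommGroup B] [NormedSpace ℝ B]

/-- The quadratic form `q(b) = ½⌊b,b⌋` associated with a bilinear form. -/
def qForm (br : B →ₗ[ℝ] B →ₗ[ℝ] ℝ) (b : B) : ℝ := (1 / 2) * br b b

/-- The intrinsic conjugate `f^@(c) = sup_{b} (⌊b,c⌋ - f(b))`. -/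
def intrinsicConj (br : B →ₗ[ℝ] B →ₗ[ℝ] ℝ) (f : B → EReal) (c : B) : EReal :=
  ⨆ b : B, ((br b c : ℝ) : EReal) - f b

/-- A proper function from `B` into `(-∞,∞]`: never `⊥` and somewhere finite. -/
def ProperFn (f : B → EReal) : Prop := (∀ b, f b ≠ ⊥) ∧ ∃ b, f b ≠ ⊤

/-- Convexity for `(-∞,∞]`-valued functions. -/
def ConvexFn (f : B → EReal) : Prop :=
  ∀ b c : B, ∀ t : ℝ, 0 ≤ t → t ≤ 1 →
    f (t • b + (1 - t) • c) ≤ (t : EReal) * f b + ((1 - t : ℝ) : EReal) * f c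

/-- `A` is q-positive: nonempty and `q(b - c) ≥ 0` for all `b, c ∈ A`. -/
def QPos (br : B →ₗ[ℝ] B →ₗ[ℝ] ℝ) (A : Set B) : Prop :=
  A.Nonempty ∧ ∀ b ∈ A, ∀ c ∈ A, 0 ≤ qForm br (b - c)

/-- `A` is maximally q-positive. -/
def MaxQPos (br : B →ₗ[ℝ] B →ₗ[ℝ] ℝ) (A : Set B) : Prop :=
  QPos br A ∧ ∀ C : Set B, QPos br C → A ⊆ C → C = A

/-- `P_q(f) = {b : f(b) = q(b)}`. -/
def Pq (br : B →ₗ[ℝ] B →ₗ[ℝ] ℝ) (f : B → EReal) : Set B :=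
  {b : B | f b = ((qForm br b : ℝ) : EReal)}

/-- `N_q(g) = {b : g(b) = -q(b)}`. -/
def Nq (br : B →ₗ[ℝ] B →ₗ[ℝ] ℝ) (f : B → EReal) : Set B :=
  {b : B | f b = ((-(qForm br b) : ℝ) : EReal)}

/-- `f` is a BC-function: `f^@(b) ≥ f(b) ≥ q(b)` for all `b`. -/
def IsBC (br : B →ₗ[ℝ] B →ₗ[ℝ] ℝ) (f : B → EReal) : Prop :=
  ∀ b : B, ((qForm br b : ℝ) : EReal) ≤ f b ∧ f b ≤ intrinsicConj br f b

/-- `g` is a TBC-function: `g^@(-b) ≥ g(b) ≥ -q(b)` for all `b`. -/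
def IsTBC (br : B →ₗ[ℝ] B →ₗ[ℝ] ℝ) (g : B → EReal) : Prop :=
  ∀ b : B, ((-(qForm br b) : ℝ) : EReal) ≤ g b ∧ g b ≤ intrinsicConj br g (-b)

/-- The effective domain `dom f = {b : f(b) ∈ ℝ}`. -/
def domE (f : B → EReal) : Set B := {b : B | ∃ r : ℝ, f b = (r : EReal)}

/-- `(B, ⌊·,·⌋, ‖·‖)` is an SSDB space: there is a surjective linear isometry
`ι : B → B*` with `⟨b, ι(c)⟩ = ⌊b,c⌋` for all `b, c`. -/
def IsSSDB (br : B →ₗ[ℝ] B →ₗ[ℝ] ℝ) : Prop :=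
  ∃ ι : B ≃ₗᵢ[ℝ] StrongDual ℝ B, ∀ b c : B, ι c b = br b c


/-- Case analysis for `EReal`s that are not `⊥`. -/
lemma ereal_ne_bot_cases (x : EReal) (h : x ≠ ⊥) : x = ⊤ ∨ ∃ v : ℝ, x = (v : EReal) := by
  induction x using EReal.rec with
  | bot => exact absurd rfl h
  | coe v => exact Or.inr ⟨v, rfl⟩
  | top => exact Or.inl rfl

/-- Expansion of the quadratic form of a sum. -/
lemma qForm_add (br : B →ₗ[ℝ] B →ₗ[ℝ] ℝ) (hsymm : ∀ b c : B, br b c = br c b) (a b : B) :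
    qForm br (a + b) = qForm br a + br a b + qForm br b := by
  unfold qForm
  have h1 : br (a + b) (a + b) = br a a + br a b + br b a + br b b := by
    simp [map_add]; ring
  rw [h1, hsymm b a]; ring

/-- Expansion of the quadratic form of a difference. -/
lemma qForm_sub (br : B →ₗ[ℝ] B →ₗ[ℝ] ℝ) (hsymm : ∀ b c : B, br b c = br c b) (a b : B) :
    qForm br (a - b) = qForm br a - br a b + qForm br b := by
  have := qForm_add br hsymm a (-b)
  simp only [map_neg, LinearMap.neg_apply] at this
  have hb : qForm br (-b) = qForm br b := by
    unfold qForm; simp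
  rw [← sub_eq_add_neg] at this
  rw [this, hb]; ring

/-- in an SSDB space, if `f ∈ PC(B)` is a BC-function and `g : B → ℝ` is a
continuous (convex) TBC-function, then `P_q(f) - N_q(g) = B`. -/
theorem stmt8 [CompleteSpace B] [Nontrivial B]
    (br : B →ₗ[ℝ] B →ₗ[ℝ] ℝ) (hsymm : ∀ b c : B, br b c = br c b)
    (hssdb : IsSSDB br)
    (f : B → EReal) (hfproper : ProperFn f) (hfconv : ConvexFn f) (hbc : IsBC br f)
    (g : B → ℝ) (hgcont : Continuous g) (hgconv : ConvexOn ℝ Set.univ g)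
    (htbc : IsTBC br (fun b : B => ((g b : ℝ) : EReal))) :
    ∀ c : B, ∃ p ∈ Pq br f, ∃ n : B, g n = -(qForm br n) ∧ c = p - n := by
  obtain ⟨ι, hι⟩ := hssdb
  intro c
  -- continuity of the pairing in the first variable
  have hbrcont : ∀ d : B, Continuous fun p : B => br p d := by
    intro d
    have : (fun p : B => br p d) = fun p : B => ι d p := by
      funext p; rw [hι]
    rw [this]
    exact (ι d).cont
  -- the concave continuous minorant
  set k : B → ℝ := fun p => br p c - qForm br c - g (p - c) with hk
  have hkcont : Continuous k := by
    apply Continuous.sub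
    · exact (hbrcont c).sub continuous_const
    · exact hgcont.comp (continuous_id.sub continuous_const)
  -- k ≤ q pointwise
  have hkq : ∀ p : B, k p ≤ qForm br p := by
    intro p
    have hg : -(qForm br (p - c)) ≤ g (p - c) :=
      EReal.coe_le_coe_iff.mp (htbc (p - c)).1
    have hqe : qForm br (p - c) = qForm br p - br p c + qForm br c :=
      qForm_sub br hsymm p c
    simp only [hk]
    linarith [hqe ▸ hg]
  -- the two sets in B × ℝ
  set A : Set (B × ℝ) := {x | x.2 < k x.1} with hA
  set Ep : Set (B × ℝ) := {x | f x.1 ≤ ((x.2 : ℝ) : EReal)} with hEp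
  clear_value k A Ep
  have hAopen : IsOpen A := by
    rw [hA]
    exact isOpen_lt continuous_snd (hkcont.comp continuous_fst)
  have hAconv : Convex ℝ A := by
    intro x hx y hy a b ha hb hab
    have hb' : b = 1 - a := by linarith
    subst hb'
    simp only [hA, Set.mem_setOf_eq] at hx hy ⊢
    have hgc : g (a • x.1 + (1 - a) • y.1 - c)
        ≤ a * g (x.1 - c) + (1 - a) * g (y.1 - c) := by
      have heq : a • x.1 + (1 - a) • y.1 - c = a • (x.1 - c) + (1 - a) • (y.1 - c) := by
        rw [smul_sub, smul_sub, sub_smul, sub_smul, one_smul, one_smul]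
        abel
      rw [heq]
      exact hgconv.2 (Set.mem_univ _) (Set.mem_univ _) ha hb hab
    have hlin : br (a • x.1 + (1 - a) • y.1) c = a * br x.1 c + (1 - a) * br y.1 c := by
      simp [map_add, map_smul, smul_eq_mul]
    have hkcomb : a * k x.1 + (1 - a) * k y.1 ≤ k (a • x.1 + (1 - a) • y.1) := by
      simp only [hk]
      nlinarith [hgc, hlin]
    have hstrict : a * x.2 + (1 - a) * y.2 < a * k x.1 + (1 - a) * k y.1 := by
      rcases eq_or_lt_of_le ha with h0 | hpos
      · rw [← h0]; simpa using hy
      · rcases eq_or_lt_of_le hb with h0' | hpos'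
        · have ha1 : a = 1 := by linarith
          rw [ha1]; simpa using hx
        · have h1 := mul_lt_mul_of_pos_left hx hpos
          have h2 := mul_lt_mul_of_pos_left hy hpos'
          linarith
    have hfst : (a • x + (1 - a) • y).1 = a • x.1 + (1 - a) • y.1 := rfl
    have hsnd : (a • x + (1 - a) • y).2 = a * x.2 + (1 - a) * y.2 := rfl
    rw [hfst, hsnd]
    exact lt_of_lt_of_le hstrict hkcomb
  have hEpconv : Convex ℝ Ep := by
    intro x hx y hy a b ha hb hab
    simp only [hEp, Set.mem_setOf_eq] at hx hy ⊢
    -- f x.1 and f y.1 are real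
    have hxne : f x.1 ≠ ⊤ := by
      intro h; rw [h] at hx; exact absurd hx (by simp)
    have hyne : f y.1 ≠ ⊤ := by
      intro h; rw [h] at hy; exact absurd hy (by simp)
    obtain ⟨u, hu⟩ := (ereal_ne_bot_cases _ (hfproper.1 x.1)).resolve_left hxne
    obtain ⟨v, hv⟩ := (ereal_ne_bot_cases _ (hfproper.1 y.1)).resolve_left hyne
    have hux : u ≤ x.2 := by rw [hu] at hx; exact_mod_cast hx
    have hvy : v ≤ y.2 := by rw [hv] at hy; exact_mod_cast hy
    have hconv := hfconv x.1 y.1 a ha (by linarith)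
    have hb1 : (1 : ℝ) - a = b := by linarith
    have hfst : (a • x + b • y).1 = a • x.1 + b • y.1 := rfl
    have hsnd : (a • x + b • y).2 = a * x.2 + b * y.2 := rfl
    calc f (a • x + b • y).1 = f (a • x.1 + (1 - a) • y.1) := by
          rw [hfst, hb1]
      _ ≤ (a : EReal) * f x.1 + ((1 - a : ℝ) : EReal) * f y.1 := hconv
      _ = ((a * u + b * v : ℝ) : EReal) := by
          rw [hu, hv, hb1, ← EReal.coe_mul, ← EReal.coe_mul, ← EReal.coe_add]
      _ ≤ (((a • x + b • y).2 : ℝ) : EReal) := by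
          rw [hsnd]
          exact_mod_cast add_le_add (mul_le_mul_of_nonneg_left hux ha)
            (mul_le_mul_of_nonneg_left hvy hb)
  have hdisj : Disjoint A Ep := by
    rw [Set.disjoint_left]
    intro x hxA hxE
    simp only [hA, hEp, Set.mem_setOf_eq] at hxA hxE
    have h1 : ((x.2 : ℝ) : EReal) < ((k x.1 : ℝ) : EReal) := by exact_mod_cast hxA
    have h2 : ((k x.1 : ℝ) : EReal) ≤ ((qForm br x.1 : ℝ) : EReal) := by
      exact_mod_cast hkq x.1
    have h3 := (hbc x.1).1
    exact absurd (hxE.trans_lt (h1.trans_le (h2.trans h3))) (lt_irrefl _)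
  obtain ⟨L, s, hLA, hLE⟩ := geometric_hahn_banach_open hAconv hAopen hEpconv hdisj
  -- decompose L
  set xs : B → ℝ := fun p => L (p, 0) with hxs
  set r : ℝ := L (0, 1) with hr
  clear_value xs r
  have hline : ∀ p : B, ∀ t : ℝ, L (p, t) = xs p + t * r := by
    intro p t
    have h1 : (p, t) = (p, (0 : ℝ)) + ((0 : B), t) := by simp
    have h2 : ((0 : B), t) = t • ((0 : B), (1 : ℝ)) := by simp
    rw [h1, map_add, h2, map_smul, smul_eq_mul, hxs, hr]
  -- a point where f is real
  obtain ⟨b₀, hb₀⟩ := hfproper.2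
  obtain ⟨r₀, hr₀⟩ := (ereal_ne_bot_cases _ (hfproper.1 b₀)).resolve_left hb₀
  have hb₀E : ∀ m : ℝ, 0 ≤ m → s ≤ xs b₀ + (r₀ + m) * r := by
    intro m hm
    have : (b₀, r₀ + m) ∈ Ep := by
      simp only [hEp, Set.mem_setOf_eq, hr₀]
      exact_mod_cast le_add_of_nonneg_right hm
    have := hLE _ this
    rwa [hline] at this
  have hb₀A : xs b₀ + (k b₀ - 1) * r < s := by
    have : (b₀, k b₀ - 1) ∈ A := by
      simp only [hA, Set.mem_setOf_eq]; linarith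
    have := hLA _ this
    rwa [hline] at this
  -- r > 0
  have hrpos : 0 < r := by
    rcases lt_trichotomy r 0 with hneg | hzero | hpos
    · exfalso
      have h0 := hb₀E 0 le_rfl
      set m : ℝ := (xs b₀ + r₀ * r - s + 1) / (-r) with hm
      have hmnum : (0 : ℝ) < xs b₀ + r₀ * r - s + 1 := by linarith
      have hmpos : 0 ≤ m := le_of_lt (div_pos hmnum (by linarith))
      have hrne' : -r ≠ 0 := ne_of_gt (by linarith)
      have hmr : m * (-r) = xs b₀ + r₀ * r - s + 1 := by
        rw [hm]; exact div_mul_cancel₀ _ hrne'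
      have := hb₀E m hmpos
      nlinarith
    · exfalso
      have h0 := hb₀E 0 le_rfl
      rw [hzero] at h0 hb₀A
      simp at h0 hb₀A
      linarith
    · exact hpos
  have hrne : r ≠ 0 := ne_of_gt hrpos
  -- pull back the functional through ι
  set w : B := ι.symm ((-(r⁻¹)) • (L.comp (ContinuousLinearMap.inl ℝ B ℝ))) with hw
  clear_value w
  have hxsL : ∀ p : B, (L.comp (ContinuousLinearMap.inl ℝ B ℝ)) p = xs p := by
    intro p
    rw [ContinuousLinearMap.comp_apply, ContinuousLinearMap.inl_apply, hxs]
  have hbrw : ∀ p : B, br p w = -(r⁻¹) * xs p := by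
    intro p
    rw [← hι p w, hw, LinearIsometryEquiv.apply_symm_apply]
    simp only [ContinuousLinearMap.coe_smul', Pi.smul_apply, smul_eq_mul]
    rw [hxsL]
  have hxsw : ∀ p : B, xs p = -r * br p w := by
    intro p
    rw [hbrw p]
    field_simp
  set β : ℝ := s / r with hβ
  clear_value β
  have hβr : β * r = s := by rw [hβ]; exact div_mul_cancel₀ s hrne
  -- upper affine bound on f: br p w + β ≤ f p
  have haff_f : ∀ p : B, ∀ v : ℝ, f p = (v : EReal) → br p w + β ≤ v := by
    intro p v hv
    have hmem : (p, v) ∈ Ep := by simp [hEp, hv]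
    have := hLE _ hmem
    rw [hline, hxsw] at this
    nlinarith
  -- f^@(w) ≤ -β
  have hfconj : intrinsicConj br f w ≤ ((-β : ℝ) : EReal) := by
    apply iSup_le
    intro p
    rcases ereal_ne_bot_cases (f p) (hfproper.1 p) with htop | ⟨v, hv⟩
    · rw [htop, EReal.sub_top]; exact bot_le
    · rw [hv, ← EReal.coe_sub]
      exact EReal.coe_le_coe_iff.mpr (by linarith [haff_f p v hv])
  -- q(w) ≤ -β
  have hqwle : qForm br w ≤ -β := by
    have h1 := (hbc w).1
    have h2 := (hbc w).2
    have := h1.trans (h2.trans hfconj)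
    exact_mod_cast this
  -- lower affine bound: k p ≤ br p w + β
  have haff_k : ∀ p : B, k p ≤ br p w + β := by
    intro p
    by_contra hcon
    push_neg at hcon
    have hmem : (p, (k p + br p w + β) / 2) ∈ A := by
      simp only [hA, Set.mem_setOf_eq]; linarith
    have hlt := hLA _ hmem
    rw [hline, hxsw] at hlt
    nlinarith [mul_lt_mul_of_pos_right hcon hrpos]
  -- g^@(c - w) ≤ br c w + β - q c
  have haff_g : ∀ b : B, br b (c - w) - g b ≤ br c w + β - qForm br c := by
    intro b
    have h1 := haff_k (b + c)
    rw [hk] at h1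
    simp only at h1
    have h2 : b + c - c = b := by abel
    rw [h2] at h1
    have h3 : br (b + c) c = br b c + 2 * qForm br c := by
      simp [map_add, qForm]; try ring
    have h4 : br (b + c) w = br b w + br c w := by simp [map_add]
    have h5 : br b (c - w) = br b c - br b w := by simp [map_sub]
    linarith
  have hgconj : intrinsicConj br (fun b : B => ((g b : ℝ) : EReal)) (c - w)
      ≤ ((br c w + β - qForm br c : ℝ) : EReal) := by
    apply iSup_le
    intro b
    rw [← EReal.coe_sub]
    exact_mod_cast haff_g b
  -- evaluate TBC at w - c
  have hneg : -(w - c) = c - w := by abel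
  have htbc1 : -(qForm br (w - c)) ≤ g (w - c) :=
    EReal.coe_le_coe_iff.mp (htbc (w - c)).1
  have htbc2 : g (w - c) ≤ br c w + β - qForm br c := by
    have h2 := (htbc (w - c)).2
    rw [hneg] at h2
    exact EReal.coe_le_coe_iff.mp (h2.trans hgconj)
  have hqwc : qForm br (w - c) = qForm br w - br w c + qForm br c :=
    qForm_sub br hsymm w c
  -- -q(w) ≤ β, hence q(w) = -β
  have hqwge : -β ≤ qForm br w := by
    have hsy : br w c = br c w := hsymm w c
    nlinarith [htbc1, htbc2, hqwc]
  have hqweq : qForm br w = -β := le_antisymm hqwle hqwge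
  -- p := w is in Pq
  refine ⟨w, ?_, w - c, ?_, ?_⟩
  · show f w = ((qForm br w : ℝ) : EReal)
    apply le_antisymm
    · have := (hbc w).2.trans hfconj
      rwa [show (-β : ℝ) = qForm br w by linarith] at this
    · exact (hbc w).1
  · -- g (w - c) = -(q (w - c))
    apply le_antisymm
    · have : br c w + β - qForm br c = -(qForm br (w - c)) := by
        rw [hqwc, hsymm w c]; linarith
      linarith [htbc2]
    · exact htbc1
  · abel
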